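/- For all real x with 0 < |x| < 1, 1/sin(πx) − 1/(πx) = (2/π) Σ_{k=1}^∞ (1 − 2^{−(2k−1)}) ζ(2k) x^{2k−1}, and the series converges absolutely. -/

import Mathlib

open Real Filter Topology Finset

/-- The Riemann zeta function at a natural number argument `s`:
`ζ(s) = Σ_{n ≥ 1} n^{-s}`. -/
noncomputable def zetaNat (s : ℕ) : ℝ := ∑' n : ℕ+, ((n : ℝ) ^ s)⁻¹

lemma zetaNat_eq (s : ℕ) : zetaNat s = ∑' k : ℕ, (((k : ℝ) + 1) ^ s)⁻¹ := by
  rw [zetaNat, ← Equiv.pnatEquivNat.symm.tsum_eq]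
  congr 1
  ext k
  simp [Equiv.pnatEquivNat, Nat.succPNat]

lemma summable_aux_sq : Summable (fun k : ℕ => (((k : ℝ) + 1) ^ 2)⁻¹) := by
  have h := (summable_one_div_nat_pow (p := 2)).mpr one_lt_two
  have h2 := (summable_nat_add_iff 1).mpr h
  simpa [one_div] using h2

lemma summable_zeta_terms {s : ℕ} (hs : 2 ≤ s) :
    Summable (fun k : ℕ => (((k : ℝ) + 1) ^ s)⁻¹) := by
  refine summable_aux_sq.of_nonneg_of_le (fun k => by positivity) (fun k => ?_)
  have h1 : (1 : ℝ) ≤ (k : ℝ) + 1 := by linarith [k.cast_nonneg (α := ℝ)]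
  exact inv_anti₀ (by positivity) (pow_le_pow_right₀ h1 hs)

lemma hasSum_zetaNat {s : ℕ} (hs : 2 ≤ s) :
    HasSum (fun k : ℕ => (((k : ℝ) + 1) ^ s)⁻¹) (zetaNat s) := by
  rw [zetaNat_eq]; exact (summable_zeta_terms hs).hasSum

lemma zetaNat_nonneg (s : ℕ) : 0 ≤ zetaNat s := by
  rw [zetaNat_eq]
  exact tsum_nonneg fun k => by positivity

lemma zetaNat_le_two {s : ℕ} (hs : 2 ≤ s) : zetaNat s ≤ zetaNat 2 := by
  rw [zetaNat_eq, zetaNat_eq]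
  refine Summable.tsum_le_tsum (fun k => ?_) (summable_zeta_terms hs) summable_aux_sq
  have h1 : (1 : ℝ) ≤ (k : ℝ) + 1 := by linarith [k.cast_nonneg (α := ℝ)]
  exact inv_anti₀ (by positivity) (pow_le_pow_right₀ h1 hs)

/-- the log-sum function -/
noncomputable def gfun (y : ℝ) : ℝ :=
    ∑' k : ℕ, zetaNat (2 * k + 2) / ((k : ℝ) + 1) * y ^ (2 * k + 2)

lemma neg_log_le {t : ℝ} (h0 : 0 ≤ t) (h1 : t < 1) : -Real.log (1 - t) ≤ t / (1 - t) := by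
  have h1t : 0 < 1 - t := by linarith
  rw [← Real.log_inv]
  have := Real.log_le_sub_one_of_pos (inv_pos.mpr h1t)
  have h2 : (1 - t)⁻¹ - 1 = t / (1 - t) := by field_simp; ring
  linarith [h2 ▸ this]

lemma hasSum_log_gfun {y : ℝ} (hy : |y| < 1) :
    HasSum (fun j : ℕ => Real.log (1 - y ^ 2 / ((j : ℝ) + 1) ^ 2)) (-gfun y) := by
  set t : ℕ → ℝ := fun j => y ^ 2 / ((j : ℝ) + 1) ^ 2 with ht
  have hy2 : y ^ 2 < 1 := by
    have := abs_nonneg y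
    nlinarith [sq_abs y]
  have htn : ∀ j, 0 ≤ t j := fun j => by positivity
  have hj1 : ∀ j : ℕ, (1 : ℝ) ≤ ((j : ℝ) + 1) ^ 2 := fun j => by
    nlinarith [j.cast_nonneg (α := ℝ)]
  have htl : ∀ j, t j < 1 := fun j => by
    rw [ht]
    calc y ^ 2 / ((j : ℝ) + 1) ^ 2 ≤ y ^ 2 / 1 := by
          apply div_le_div_of_nonneg_left (by positivity) one_pos (hj1 j)
      _ < 1 := by simpa using hy2
  -- per-row log series
  have hlog : ∀ j : ℕ, HasSum (fun k : ℕ => (t j) ^ (k + 1) / ((k : ℝ) + 1))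
      (-Real.log (1 - t j)) := fun j => by
    have : |t j| < 1 := by rw [abs_of_nonneg (htn j)]; exact htl j
    simpa using Real.hasSum_pow_div_log_of_abs_lt_one this
  -- summability of the double series
  set F : ℕ × ℕ → ℝ := fun p => (t p.1) ^ (p.2 + 1) / ((p.2 : ℝ) + 1) with hF
  have hFnn : 0 ≤ F := fun p => by
    have := htn p.1; positivity
  have hrowsum : ∀ j, ∑' k : ℕ, F (j, k) = -Real.log (1 - t j) := fun j => (hlog j).tsum_eq
  have hFsummable : Summable F := by
    rw [summable_prod_of_nonneg hFnn]
    constructor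
    · exact fun j => (hlog j).summable
    · refine Summable.of_nonneg_of_le (fun j => ?_) (fun j => ?_)
        (((summable_aux_sq.mul_left (y ^ 2)).div_const (1 - y ^ 2)))
      · rw [hrowsum j]
        have := Real.log_nonpos (x := 1 - t j) (by linarith [htl j]) (by linarith [htn j])
        linarith
      · rw [hrowsum j]
        refine (neg_log_le (htn j) (htl j)).trans ?_
        rw [div_le_div_iff₀ (by linarith [htl j]) (by linarith)]
        have h1 : t j ≤ y ^ 2 * (((j : ℝ) + 1) ^ 2)⁻¹ := by
          rw [ht]; simp [div_eq_mul_inv]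
        have h2 : y ^ 2 * (((j : ℝ) + 1) ^ 2)⁻¹ ≤ y ^ 2 := by
          have := hj1 j
          have : (((j : ℝ) + 1) ^ 2)⁻¹ ≤ 1 := by
            rw [inv_le_one_iff₀]; right; exact this
          nlinarith
        nlinarith [htn j, htl j, hy2]
  -- swap the order of summation
  have hswap : ∑' j : ℕ, ∑' k : ℕ, F (j, k) = ∑' k : ℕ, ∑' j : ℕ, F (j, k) :=
    (Summable.tsum_comm (f := fun j k => F (j, k)) hFsummable).symm
  -- inner sum over j for fixed k equals zeta term
  have hinner : ∀ k : ℕ, ∑' j : ℕ, F (j, k)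
      = zetaNat (2 * k + 2) / ((k : ℝ) + 1) * y ^ (2 * k + 2) := by
    intro k
    have h1 : ∀ j : ℕ, F (j, k)
        = (y ^ (2 * k + 2) / ((k : ℝ) + 1)) * ((((j : ℝ) + 1) ^ (2 * k + 2))⁻¹) := by
      intro j
      rw [hF]
      simp only
      rw [ht]
      rw [div_pow, ← pow_mul, ← pow_mul]
      ring_nf
    rw [tsum_congr h1, tsum_mul_left, (hasSum_zetaNat (by omega : 2 ≤ 2 * k + 2)).tsum_eq]
    ring
  -- conclude
  have hgsum : ∑' j : ℕ, -Real.log (1 - t j) = gfun y := by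
    rw [← tsum_congr hrowsum, hswap, gfun]
    exact tsum_congr hinner
  have hsummable_rows : Summable (fun j : ℕ => -Real.log (1 - t j)) := by
    refine Summable.congr ?_ hrowsum
    exact (summable_prod_of_nonneg hFnn).mp hFsummable |>.2
  have := hsummable_rows.hasSum
  rw [hgsum] at this
  simpa using this.neg

lemma sin_eq_exp_gfun {y : ℝ} (hy : |y| < 1) :
    Real.sin (π * y) = π * y * Real.exp (-gfun y) := by
  have hy2 : ∀ j : ℕ, 0 < 1 - y ^ 2 / ((j : ℝ) + 1) ^ 2 := by
    intro j
    have hj1 : (1 : ℝ) ≤ ((j : ℝ) + 1) ^ 2 := by nlinarith [j.cast_nonneg (α := ℝ)]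
    have hy2' : y ^ 2 < 1 := by nlinarith [sq_abs y, abs_nonneg y]
    have : y ^ 2 / ((j : ℝ) + 1) ^ 2 < 1 := by
      rw [div_lt_one (by positivity)]; linarith
    linarith
  have h1 := (hasSum_log_gfun hy).tendsto_sum_nat
  have h2 : Tendsto (fun n : ℕ => π * y * ∏ j ∈ Finset.range n,
      ((1 : ℝ) - y ^ 2 / ((j : ℝ) + 1) ^ 2)) atTop (𝓝 (π * y * Real.exp (-gfun y))) := by
    have h3 : Tendsto (fun n : ℕ => Real.exp (∑ j ∈ Finset.range n,
        Real.log (1 - y ^ 2 / ((j : ℝ) + 1) ^ 2))) atTop (𝓝 (Real.exp (-gfun y))) :=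
      (Real.continuous_exp.tendsto _).comp h1
    have h4 : ∀ n : ℕ, Real.exp (∑ j ∈ Finset.range n,
        Real.log (1 - y ^ 2 / ((j : ℝ) + 1) ^ 2))
        = ∏ j ∈ Finset.range n, ((1 : ℝ) - y ^ 2 / ((j : ℝ) + 1) ^ 2) := by
      intro n
      rw [Real.exp_sum]
      exact Finset.prod_congr rfl fun j _ => Real.exp_log (hy2 j)
    rw [funext h4] at h3
    exact h3.const_mul (π * y)
  exact tendsto_nhds_unique (Real.tendsto_euler_sin_prod y) h2

lemma sin_pi_ne_zero {x : ℝ} (hx0 : x ≠ 0) (hx1 : |x| < 1) : Real.sin (π * x) ≠ 0 := by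
  rcases lt_or_gt_of_ne hx0 with h | h
  · have hx : 0 < -x := by linarith
    have hx' : -x < 1 := by rw [abs_of_neg h] at hx1; exact hx1
    have : 0 < Real.sin (π * (-x)) :=
      Real.sin_pos_of_pos_of_lt_pi (by positivity) (by nlinarith [Real.pi_pos])
    rw [mul_neg, Real.sin_neg] at this
    linarith
  · have hx' : x < 1 := by rw [abs_of_pos h] at hx1; exact hx1
    have : 0 < Real.sin (π * x) :=
      Real.sin_pos_of_pos_of_lt_pi (by positivity) (by nlinarith [Real.pi_pos])
    linarith

lemma cot_series (x : ℝ) (hx0 : x ≠ 0) (hx1 : |x| < 1) :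
    HasSum (fun k : ℕ => 2 * zetaNat (2 * k + 2) * x ^ (2 * k + 1))
      (1 / x - π * Real.cos (π * x) / Real.sin (π * x)) := by
  set r : ℝ := (|x| + 1) / 2 with hr
  have hxpos : 0 < |x| := abs_pos.mpr hx0
  have hr0 : 0 < r := by rw [hr]; positivity
  have hr1 : r < 1 := by rw [hr]; linarith
  have hxr : |x| < r := by rw [hr]; linarith
  set t : Set ℝ := Set.Ioo (-r) r with htdef
  have hxt : x ∈ t := by
    constructor <;> [linarith [neg_abs_le x]; linarith [le_abs_self x]]
  have h0t : (0 : ℝ) ∈ t := by rw [htdef]; exact Set.mem_Ioo.mpr ⟨by linarith, hr0⟩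
  -- summable bound
  set u : ℕ → ℝ := fun k => 2 * zetaNat 2 * r ^ (2 * k + 1) with hu
  have husummable : Summable u := by
    have hgeo : Summable (fun k : ℕ => r ^ (2 * k + 1)) := by
      have h1 : Summable (fun k : ℕ => r * (r ^ 2) ^ k) :=
        (summable_geometric_of_lt_one (by positivity) (by nlinarith)).mul_left r
      refine h1.congr fun k => ?_
      rw [← pow_mul, ← pow_succ']
    exact hgeo.mul_left _
  -- term derivatives
  set gk : ℕ → ℝ → ℝ := fun k y => zetaNat (2 * k + 2) / ((k : ℝ) + 1) * y ^ (2 * k + 2)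
    with hgk
  set gk' : ℕ → ℝ → ℝ := fun k y => 2 * zetaNat (2 * k + 2) * y ^ (2 * k + 1) with hgk'
  have hderiv : ∀ k : ℕ, ∀ y : ℝ, HasDerivAt (gk k) (gk' k y) y := by
    intro k y
    have h := (hasDerivAt_pow (2 * k + 2) y).const_mul (zetaNat (2 * k + 2) / ((k : ℝ) + 1))
    refine h.congr_deriv ?_
    have hk : ((k : ℝ) + 1) ≠ 0 := by positivity
    have hc : ((2 * k + 2 : ℕ) : ℝ) = 2 * ((k : ℝ) + 1) := by push_cast; ring
    rw [hgk']
    simp only [hc]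
    have h2 : 2 * k + 2 - 1 = 2 * k + 1 := by omega
    rw [h2]
    field_simp
  have hbound : ∀ (k : ℕ) (y : ℝ), y ∈ t → ‖gk' k y‖ ≤ u k := by
    intro k y hy
    have hyr : |y| ≤ r := by
      rw [abs_le]; exact ⟨le_of_lt hy.1, le_of_lt hy.2⟩
    have hz0 : 0 ≤ zetaNat (2 * k + 2) := zetaNat_nonneg _
    have hz2 : zetaNat (2 * k + 2) ≤ zetaNat 2 := zetaNat_le_two (by omega)
    rw [hgk', hu]
    simp only [norm_eq_abs]
    rw [abs_mul, abs_mul, abs_pow]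
    have h1 : |y| ^ (2 * k + 1) ≤ r ^ (2 * k + 1) :=
      pow_le_pow_left₀ (abs_nonneg y) hyr _
    have h2 : |(2 : ℝ)| = 2 := by norm_num
    rw [h2, abs_of_nonneg hz0]
    have hz2' : 0 ≤ zetaNat 2 := zetaNat_nonneg _
    calc 2 * zetaNat (2 * k + 2) * |y| ^ (2 * k + 1)
        ≤ 2 * zetaNat 2 * |y| ^ (2 * k + 1) := by
          have := pow_nonneg (abs_nonneg y) (2 * k + 1); nlinarith
      _ ≤ 2 * zetaNat 2 * r ^ (2 * k + 1) := by nlinarith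
  have hg0 : Summable (fun k : ℕ => gk k 0) := by
    refine summable_zero.congr fun k => ?_
    rw [hgk]; simp
  -- derivative of the sum
  have hgsum : HasDerivAt (fun y => ∑' k, gk k y) (∑' k, gk' k x) x :=
    hasDerivAt_tsum_of_isPreconnected husummable isOpen_Ioo (convex_Ioo _ _).isPreconnected
      (fun k y hy => hderiv k y) hbound h0t hg0 hxt
  have hgfun : (fun y => ∑' k, gk k y) = gfun := by
    ext y; rw [gfun]
  rw [hgfun] at hgsum
  -- the sum of derivatives is summable
  have hdsummable : Summable (fun k => gk' k x) :=
    Summable.of_norm_bounded husummable (fun k => hbound k x hxt)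
  -- sin(π y) = π y exp(-g y) on t; differentiate both sides at x
  have hsin : HasDerivAt (fun y : ℝ => Real.sin (π * y)) (Real.cos (π * x) * π) x := by
    have h := ((hasDerivAt_id x).const_mul π).sin
    simpa using h
  have hrhs : HasDerivAt (fun y : ℝ => π * y * Real.exp (-gfun y))
      (π * Real.exp (-gfun x) + π * x * (Real.exp (-gfun x) * -(∑' k, gk' k x))) x := by
    have h1 : HasDerivAt (fun y : ℝ => π * y) π x := by
      simpa using (hasDerivAt_id x).const_mul π
    have h2 : HasDerivAt (fun y : ℝ => Real.exp (-gfun y))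
        (Real.exp (-gfun x) * -(∑' k, gk' k x)) x := hgsum.neg.exp
    exact h1.mul h2
  have heq : (fun y : ℝ => Real.sin (π * y)) =ᶠ[nhds x]
      (fun y : ℝ => π * y * Real.exp (-gfun y)) := by
    filter_upwards [isOpen_Ioo.mem_nhds hxt] with y hy
    have : |y| < 1 := by
      rw [abs_lt]; exact ⟨by linarith [hy.1], by linarith [hy.2]⟩
    exact sin_eq_exp_gfun this
  have hsin' : HasDerivAt (fun y : ℝ => Real.sin (π * y))
      (π * Real.exp (-gfun x) + π * x * (Real.exp (-gfun x) * -(∑' k, gk' k x))) x :=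
    hrhs.congr_of_eventuallyEq heq
  have hdeq : Real.cos (π * x) * π
      = π * Real.exp (-gfun x) + π * x * (Real.exp (-gfun x) * -(∑' k, gk' k x)) :=
    hsin.unique hsin'
  -- solve for the sum
  have hsx : Real.sin (π * x) = π * x * Real.exp (-gfun x) := sin_eq_exp_gfun hx1
  have hsne : Real.sin (π * x) ≠ 0 := sin_pi_ne_zero hx0 hx1
  have hπ : (π : ℝ) ≠ 0 := Real.pi_ne_zero
  have hval : (∑' k, gk' k x) = 1 / x - π * Real.cos (π * x) / Real.sin (π * x) := by
    have hE : Real.exp (-gfun x) = Real.sin (π * x) / (π * x) := by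
      rw [hsx]; field_simp
    rw [hE] at hdeq
    field_simp at hdeq ⊢
    have hdeq2 : Real.cos (π * x) * (π * x)
        = Real.sin (π * x) + -(x * (Real.sin (π * x) * ∑' k, gk' k x)) :=
      mul_left_cancel₀ hπ (by linear_combination π * hdeq)
    linear_combination hdeq2
  rw [← hval]
  exact hdsummable.hasSum

lemma summable_odd_pow {a : ℝ} (h0 : 0 ≤ a) (h1 : a < 1) :
    Summable (fun k : ℕ => a ^ (2 * k + 1)) := by
  have h2 : Summable (fun k : ℕ => a * (a ^ 2) ^ k) :=
    (summable_geometric_of_lt_one (by positivity) (by nlinarith)).mul_left a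
  refine h2.congr fun k => ?_
  rw [← pow_mul, ← pow_succ']

/-- For `0 < |x| < 1`,
`1/sin(πx) - 1/(πx) = (2/π) Σ_{k=1}^∞ (1 - 2^{-(2k-1)}) ζ(2k) x^{2k-1}`,
the series converging absolutely.  (The sum is reindexed by `k ↦ k + 1`.) -/
theorem stmt9 (x : ℝ) (hx0 : x ≠ 0) (hx1 : |x| < 1) :
    Summable (fun k : ℕ =>
      |(2 / Real.pi) * (1 - ((2 : ℝ) ^ (2 * k + 1))⁻¹) * zetaNat (2 * k + 2) * x ^ (2 * k + 1)|) ∧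
    HasSum (fun k : ℕ =>
      (2 / Real.pi) * (1 - ((2 : ℝ) ^ (2 * k + 1))⁻¹) * zetaNat (2 * k + 2) * x ^ (2 * k + 1))
      (1 / Real.sin (Real.pi * x) - 1 / (Real.pi * x)) := by
  have hπ : (0 : ℝ) < π := Real.pi_pos
  constructor
  · -- absolute summability
    have hb : Summable (fun k : ℕ => 2 / π * zetaNat 2 * |x| ^ (2 * k + 1)) :=
      (summable_odd_pow (abs_nonneg x) hx1).mul_left _
    refine hb.of_nonneg_of_le (fun k => abs_nonneg _) (fun k => ?_)
    have h2pi : |(2 : ℝ) / π| = 2 / π := abs_of_nonneg (by positivity)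
    have hinv0 : (0 : ℝ) ≤ ((2 : ℝ) ^ (2 * k + 1))⁻¹ := by positivity
    have hinv1 : ((2 : ℝ) ^ (2 * k + 1))⁻¹ ≤ 1 := by
      rw [inv_le_one_iff₀]; right; exact one_le_pow₀ one_le_two
    have hfac : |1 - ((2 : ℝ) ^ (2 * k + 1))⁻¹| ≤ 1 := by
      rw [abs_of_nonneg (by linarith)]; linarith
    have hz : |zetaNat (2 * k + 2)| ≤ zetaNat 2 := by
      rw [abs_of_nonneg (zetaNat_nonneg _)]; exact zetaNat_le_two (by omega)
    calc |2 / π * (1 - ((2 : ℝ) ^ (2 * k + 1))⁻¹) * zetaNat (2 * k + 2) * x ^ (2 * k + 1)|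
        = 2 / π * (|1 - ((2 : ℝ) ^ (2 * k + 1))⁻¹| * |zetaNat (2 * k + 2)|) * |x| ^ (2 * k + 1) := by
          rw [abs_mul, abs_mul, abs_mul, abs_pow, h2pi]; ring
      _ ≤ 2 / π * (1 * zetaNat 2) * |x| ^ (2 * k + 1) := by
          refine mul_le_mul_of_nonneg_right (mul_le_mul_of_nonneg_left ?_ (by positivity))
            (pow_nonneg (abs_nonneg x) _)
          exact mul_le_mul hfac hz (abs_nonneg _) zero_le_one
      _ = 2 / π * zetaNat 2 * |x| ^ (2 * k + 1) := by ring
  · -- the HasSum statement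
    have h1 := cot_series x hx0 hx1
    have hx20 : x / 2 ≠ 0 := div_ne_zero hx0 two_ne_zero
    have hx21 : |x / 2| < 1 := by
      rw [abs_div, abs_two]; linarith [abs_nonneg x]
    have h2 := cot_series (x / 2) hx20 hx21
    have h3 := (h1.sub h2).div_const π
    have hterm : (fun k : ℕ => (2 * zetaNat (2 * k + 2) * x ^ (2 * k + 1)
          - 2 * zetaNat (2 * k + 2) * (x / 2) ^ (2 * k + 1)) / π)
        = (fun k : ℕ => (2 / π) * (1 - ((2 : ℝ) ^ (2 * k + 1))⁻¹) * zetaNat (2 * k + 2)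
          * x ^ (2 * k + 1)) := by
      funext k
      rw [div_pow]
      have h2k : ((2 : ℝ) ^ (2 * k + 1)) ≠ 0 := by positivity
      field_simp
    have hs1 := sin_pi_ne_zero hx0 hx1
    have hs2 := sin_pi_ne_zero hx20 hx21
    have hval : (1 / x - π * Real.cos (π * x) / Real.sin (π * x)
          - (1 / (x / 2) - π * Real.cos (π * (x / 2)) / Real.sin (π * (x / 2)))) / π
        = 1 / Real.sin (π * x) - 1 / (π * x) := by
      have hss := Real.sin_sub (π * x) (π * (x / 2))
      have h2h : π * x - π * (x / 2) = π * (x / 2) := by ring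
      rw [h2h] at hss
      set a := Real.sin (π * (x / 2)) with ha
      set b := Real.cos (π * (x / 2)) with hb
      set c := Real.sin (π * x) with hc
      set d := Real.cos (π * x) with hd
      field_simp
      linear_combination (-(x * π)) * hss
    rw [hterm, hval] at h3
    exact h3
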